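/- Let L and R be two bracketings (associations) of a product of the same ordered list of n variables in the vector cross product algebra on R^3. If there is an assignment of values from {i, j, k} to the variables such that both fully parenthesized products L and R are nonzero, then L = R under that assignment. -/

import Mathlib

namespace FourColor

/-- A bracketing (association) of a product of `n` ordered variables. -/
inductive Bracketing : ℕ → Type
  | leaf : Bracketing 1
  | node {m n : ℕ} : Bracketing m → Bracketing n → Bracketing (m + n)

/-- Evaluate a bracketing on an ordered list of vectors in `ℝ³`, using the
vector cross product at every internal node. -/
def evalB : {n : ℕ} → Bracketing n → (Fin n → (Fin 3 → ℝ)) → (Fin 3 → ℝ)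
  | _, .leaf, x => x 0
  | _, .node l r, x =>
      crossProduct (evalB l fun i => x (Fin.castAdd _ i)) (evalB r fun j => x (Fin.natAdd _ j))

end FourColor

open FourColor

namespace Stmt17Aux

/-- signed basis vector -/
def emb : Bool × Fin 3 → Fin 3 → ℝ
  | (true, 0) => ![1, 0, 0]
  | (true, 1) => ![0, 1, 0]
  | (true, 2) => ![0, 0, 1]
  | (false, 0) => ![-1, 0, 0]
  | (false, 1) => ![0, -1, 0]
  | (false, 2) => ![0, 0, -1]

def cidx : Fin 3 → Fin 3 → Option (Bool × Fin 3)
  | 0, 0 => none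
  | 1, 1 => none
  | 2, 2 => none
  | 0, 1 => some (true, 2)
  | 1, 0 => some (false, 2)
  | 1, 2 => some (true, 0)
  | 2, 1 => some (false, 0)
  | 2, 0 => some (true, 1)
  | 0, 2 => some (false, 1)

def cmul (p q : Bool × Fin 3) : Option (Bool × Fin 3) :=
  (cidx p.2 q.2).map fun r => (((p.1 == q.1) == r.1), r.2)

lemma cross_emb (p q : Bool × Fin 3) :
    crossProduct (emb p) (emb q) = (cmul p q).elim 0 emb := by
  obtain ⟨s, i⟩ := p
  obtain ⟨t, j⟩ := q
  rcases s <;> rcases t <;> fin_cases i <;> fin_cases j <;>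
    · funext k
      fin_cases k <;>
        (norm_num [cross_apply, emb, cmul, cidx, Matrix.cons_val] <;> simp)

def g : Bool × Fin 3 → QuaternionGroup 2
  | (true, 0) => .a 1
  | (true, 1) => .xa 0
  | (true, 2) => .xa 3
  | (false, 0) => .a 3
  | (false, 1) => .xa 2
  | (false, 2) => .xa 1

lemma g_inj : Function.Injective g := by decide

lemma g_cmul : ∀ p q r : Bool × Fin 3, cmul p q = some r → g r = g p * g q := by decide

open scoped Classical in
noncomputable def gv (v : Fin 3 → ℝ) : QuaternionGroup 2 :=
  if v = ![1, 0, 0] then g (true, 0)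
  else if v = ![0, 1, 0] then g (true, 1)
  else if v = ![0, 0, 1] then g (true, 2)
  else 1

lemma ne01 : (![1, 0, 0] : Fin 3 → ℝ) ≠ ![0, 1, 0] := fun h => by simpa using congrFun h 0
lemma ne02 : (![1, 0, 0] : Fin 3 → ℝ) ≠ ![0, 0, 1] := fun h => by simpa using congrFun h 0
lemma ne12 : (![0, 1, 0] : Fin 3 → ℝ) ≠ ![0, 0, 1] := fun h => by simpa using congrFun h 1

lemma gv0 : gv ![1, 0, 0] = g (true, 0) := by rw [gv, if_pos rfl]
lemma gv1 : gv ![0, 1, 0] = g (true, 1) := by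
  rw [gv, if_neg (Ne.symm ne01), if_pos rfl]
lemma gv2 : gv ![0, 0, 1] = g (true, 2) := by
  rw [gv, if_neg (Ne.symm ne02), if_neg (Ne.symm ne12), if_pos rfl]

lemma main : ∀ {n : ℕ} (T : Bracketing n) (x : Fin n → (Fin 3 → ℝ)),
    (∀ t, x t = ![1, 0, 0] ∨ x t = ![0, 1, 0] ∨ x t = ![0, 0, 1]) →
    evalB T x ≠ 0 →
    ∃ p, evalB T x = emb p ∧ g p = (List.ofFn fun t => gv (x t)).prod
  | _, .leaf, x, hx, _ => by
    have hev : evalB .leaf x = x 0 := rfl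
    have hl : (List.ofFn fun t : Fin 1 => gv (x t)).prod = gv (x 0) := by simp
    rcases hx 0 with h | h | h
    · exact ⟨(true, 0), by rw [hev, h]; rfl, by rw [hl, h, gv0]⟩
    · exact ⟨(true, 1), by rw [hev, h]; rfl, by rw [hl, h, gv1]⟩
    · exact ⟨(true, 2), by rw [hev, h]; rfl, by rw [hl, h, gv2]⟩
  | _, .node l r, x, hx, h => by
    have hev : evalB (.node l r) x =
        crossProduct (evalB l fun i => x (Fin.castAdd _ i))
          (evalB r fun j => x (Fin.natAdd _ j)) := rfl
    have hln : (evalB l fun i => x (Fin.castAdd _ i)) ≠ 0 := by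
      intro h0
      apply h
      rw [hev, h0]
      exact LinearMap.map_zero₂ _ _
    have hrn : (evalB r fun j => x (Fin.natAdd _ j)) ≠ 0 := by
      intro h0
      apply h
      rw [hev, h0]
      exact map_zero _
    obtain ⟨p, hp, hgp⟩ := main l (fun i => x (Fin.castAdd _ i)) (fun i => hx _) hln
    obtain ⟨q, hq, hgq⟩ := main r (fun j => x (Fin.natAdd _ j)) (fun j => hx _) hrn
    have hcross : evalB (.node l r) x = (cmul p q).elim 0 emb := by
      rw [hev, hp, hq, cross_emb]
    obtain ⟨s, hs⟩ : ∃ s, cmul p q = some s := by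
      cases hc : cmul p q with
      | none => exact absurd (by rw [hcross, hc]; rfl) h
      | some s => exact ⟨s, rfl⟩
    refine ⟨s, by rw [hcross, hs]; rfl, ?_⟩
    rw [g_cmul p q s hs, hgp, hgq,
      show (List.ofFn fun t => gv (x t)) =
        (List.ofFn fun i => gv (x (Fin.castAdd _ i))) ++
          (List.ofFn fun j => gv (x (Fin.natAdd _ j))) from List.ofFn_add,
      List.prod_append]

end Stmt17Aux

open Stmt17Aux in
/-- if two bracketings `L, R` of the same ordered list of
variables both evaluate to a nonzero vector under an assignment of the values
`i, j, k` (the standard basis of `ℝ³`) to the variables, then the two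
evaluations are equal. -/
theorem stmt17 (n : ℕ) (L R : Bracketing n) (x : Fin n → (Fin 3 → ℝ))
    (hx : ∀ t, x t = ![1, 0, 0] ∨ x t = ![0, 1, 0] ∨ x t = ![0, 0, 1])
    (hL : evalB L x ≠ 0) (hR : evalB R x ≠ 0) :
    evalB L x = evalB R x := by
  obtain ⟨p, hp, hgp⟩ := main L x hx hL
  obtain ⟨q, hq, hgq⟩ := main R x hx hR
  rw [hp, hq, g_inj (hgp.trans hgq.symm)]
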